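/- Let δ > 0 and let w : [0, δ] → [0, ∞) be absolutely continuous and nondecreasing with w(0) = 0 and w(z) > 0 on (0, δ]. Then it is impossible that both ∫₀^δ 1/w(z) dz < ∞ and ∫₀^δ (w′(z))²/w(z) dz < ∞. -/

import Mathlib

open MeasureTheory

/-- If w is absolutely continuous and nondecreasing on [0, δ] (with a.e. derivative
f ≥ 0, so that w(z) = ∫₀^z f), w(0) = 0 and w > 0 on (0, δ], then ∫₀^δ 1/w and
∫₀^δ (w′)²/w cannot both be finite. -/
theorem stmt_14 (δ : ℝ) (hδ : 0 < δ) (w f : ℝ → ℝ)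
    (hf_int : IntegrableOn f (Set.Ioc 0 δ))
    (hf_nonneg : ∀ᵐ z ∂(volume.restrict (Set.Ioc 0 δ)), 0 ≤ f z)
    (hw : ∀ z ∈ Set.Icc 0 δ, w z = ∫ t in Set.Ioc 0 z, f t)
    (hw_pos : ∀ z ∈ Set.Ioc 0 δ, 0 < w z) :
    ¬ ((∫⁻ z in Set.Ioc 0 δ, ENNReal.ofReal (1 / w z)) ≠ ⊤ ∧
       (∫⁻ z in Set.Ioc 0 δ, ENNReal.ofReal (f z ^ 2 / w z)) ≠ ⊤) := by
  rintro ⟨hA, hB⟩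
  -- basic facts
  have hw0 : w 0 = 0 := by
    rw [hw 0 ⟨le_refl 0, hδ.le⟩]; simp
  have hf_icc : IntegrableOn f (Set.Icc 0 δ) :=
    (integrableOn_Icc_iff_integrableOn_Ioc).mpr hf_int
  have hwcont : ContinuousOn w (Set.Icc 0 δ) :=
    (intervalIntegral.continuousOn_primitive hf_icc).congr fun x hx => hw x hx
  -- additivity of w
  have haux : ∀ a b : ℝ, 0 ≤ a → a ≤ b → b ≤ δ →
      w a + ∫ t in Set.Ioc a b, f t = w b := by
    intro a b h0 hab hbδ
    rw [hw a ⟨h0, hab.trans hbδ⟩, hw b ⟨h0.trans hab, hbδ⟩,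
      ← Set.Ioc_union_Ioc_eq_Ioc h0 hab,
      setIntegral_union (Set.Ioc_disjoint_Ioc_of_le le_rfl) measurableSet_Ioc
        (hf_int.mono_set (Set.Ioc_subset_Ioc le_rfl (hab.trans hbδ)))
        (hf_int.mono_set (Set.Ioc_subset_Ioc h0 hbδ))]
  -- nonnegativity of integrals of f over subintervals
  have hnn : ∀ a b : ℝ, 0 ≤ a → b ≤ δ → 0 ≤ ∫ t in Set.Ioc a b, f t := by
    intro a b h0 hbδ
    apply integral_nonneg_of_ae
    exact ae_restrict_of_ae_restrict_of_subset (Set.Ioc_subset_Ioc h0 hbδ) hf_nonneg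
  have hmono : ∀ a b : ℝ, 0 ≤ a → a ≤ b → b ≤ δ → w a ≤ w b := by
    intro a b h0 hab hbδ
    have := haux a b h0 hab hbδ
    have := hnn a b h0 hbδ
    linarith
  -- the doubling construction: lower bounds n/2
  have key : ∀ n : ℕ, ∃ x, x ∈ Set.Ioc 0 δ ∧ w x = w δ / 2 ^ n ∧
      ENNReal.ofReal ((n : ℝ) / 2) ≤ ∫⁻ z in Set.Ioc x δ, ENNReal.ofReal (f z / w z) := by
    intro n
    induction n with
    | zero =>
      refine ⟨δ, ⟨hδ, le_rfl⟩, by simp, ?_⟩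
      simp
    | succ n ih =>
      obtain ⟨x, hx, hwx, hint⟩ := ih
      have wxpos : 0 < w x := hw_pos x hx
      have hmem : w x / 2 ∈ Set.Ioo (w 0) (w x) := by
        rw [hw0]; constructor <;> linarith
      obtain ⟨y, hy, hwy⟩ := intermediate_value_Ioo hx.1.le
        (hwcont.mono (Set.Icc_subset_Icc_right hx.2)) hmem
      have hy0 : 0 < y := hy.1
      have hyx : y < x := hy.2
      have hyδ : y ≤ δ := hyx.le.trans hx.2
      have hwyx : w y + ∫ t in Set.Ioc y x, f t = w x := haux y x hy0.le hyx.le hx.2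
      have hintyx : ∫ t in Set.Ioc y x, f t = w x / 2 := by
        rw [hwy] at hwyx; linarith
      -- lower bound over the piece (y, x]
      have hae : ∀ᵐ z ∂(volume.restrict (Set.Ioc y x)), 0 ≤ f z :=
        ae_restrict_of_ae_restrict_of_subset (Set.Ioc_subset_Ioc hy0.le hx.2) hf_nonneg
      have h1 : ∫⁻ z in Set.Ioc y x, ENNReal.ofReal (f z / w x)
          ≤ ∫⁻ z in Set.Ioc y x, ENNReal.ofReal (f z / w z) := by
        apply lintegral_mono_ae
        filter_upwards [hae, ae_restrict_mem measurableSet_Ioc] with z hz hzm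
        apply ENNReal.ofReal_le_ofReal
        have hwz : 0 < w z := hw_pos z ⟨hy0.trans hzm.1, hzm.2.trans hx.2⟩
        have hwzx : w z ≤ w x := hmono z x (hy0.trans hzm.1).le hzm.2 hx.2
        gcongr
      have h2 : ∫⁻ z in Set.Ioc y x, ENNReal.ofReal (f z / w x)
          = ENNReal.ofReal (1 / 2) := by
        rw [← ofReal_integral_eq_lintegral_ofReal]
        · rw [integral_div, hintyx]
          congr 1
          field_simp
        · exact ((hf_int.mono_set (Set.Ioc_subset_Ioc hy0.le hx.2)).div_const _)
        · filter_upwards [hae] with z hz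
          exact div_nonneg hz wxpos.le
      have hunion : Set.Ioc y x ∪ Set.Ioc x δ = Set.Ioc y δ :=
        Set.Ioc_union_Ioc_eq_Ioc hyx.le hx.2
      refine ⟨y, ⟨hy0, hyδ⟩, by rw [hwy, hwx]; ring, ?_⟩
      rw [← hunion, lintegral_union measurableSet_Ioc (Set.Ioc_disjoint_Ioc_of_le le_rfl)]
      calc ENNReal.ofReal ((n + 1 : ℕ) / 2)
          = ENNReal.ofReal (1 / 2) + ENNReal.ofReal ((n : ℝ) / 2) := by
            rw [← ENNReal.ofReal_add (by positivity) (by positivity)]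
            congr 1
            push_cast
            ring
        _ ≤ _ := add_le_add (h2 ▸ h1) hint
  -- the total integral of f/w is bounded above by A + B
  have hw_am : AEMeasurable w (volume.restrict (Set.Ioc 0 δ)) := by
    have : AEMeasurable w (volume.restrict (Set.Icc 0 δ)) :=
      hwcont.aemeasurable measurableSet_Icc
    exact this.mono_measure (Measure.restrict_mono Set.Ioc_subset_Icc_self le_rfl)
  have hf_am : AEMeasurable f (volume.restrict (Set.Ioc 0 δ)) :=
    hf_int.aemeasurable
  have mA : AEMeasurable (fun z => ENNReal.ofReal (f z ^ 2 / w z))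
      (volume.restrict (Set.Ioc 0 δ)) :=
    ENNReal.measurable_ofReal.comp_aemeasurable ((hf_am.pow_const 2).div hw_am)
  have hle : (∫⁻ z in Set.Ioc 0 δ, ENNReal.ofReal (f z / w z))
      ≤ (∫⁻ z in Set.Ioc 0 δ, ENNReal.ofReal (f z ^ 2 / w z))
        + (∫⁻ z in Set.Ioc 0 δ, ENNReal.ofReal (1 / w z)) := by
    calc (∫⁻ z in Set.Ioc 0 δ, ENNReal.ofReal (f z / w z))
        ≤ ∫⁻ z in Set.Ioc 0 δ,
            (ENNReal.ofReal (f z ^ 2 / w z) + ENNReal.ofReal (1 / w z)) := by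
          apply lintegral_mono_ae
          filter_upwards [ae_restrict_mem measurableSet_Ioc] with z hz
          have hwz : 0 < w z := hw_pos z hz
          calc ENNReal.ofReal (f z / w z)
              ≤ ENNReal.ofReal (f z ^ 2 / w z + 1 / w z) := by
                apply ENNReal.ofReal_le_ofReal
                rw [← add_div]
                gcongr
                nlinarith [sq_nonneg (f z - 1)]
            _ ≤ _ := ENNReal.ofReal_add_le
      _ = _ := lintegral_add_left' mA _
  have hfin : (∫⁻ z in Set.Ioc 0 δ, ENNReal.ofReal (f z / w z)) ≠ ⊤ :=
    ne_top_of_le_ne_top (ENNReal.add_ne_top.mpr ⟨hB, hA⟩) hle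
  -- derive the contradiction
  obtain ⟨n, hn⟩ := exists_nat_gt
    (2 * (∫⁻ z in Set.Ioc 0 δ, ENNReal.ofReal (f z / w z)).toReal)
  obtain ⟨x, hx, -, hbound⟩ := key n
  have : ENNReal.ofReal ((n : ℝ) / 2)
      ≤ ∫⁻ z in Set.Ioc 0 δ, ENNReal.ofReal (f z / w z) :=
    hbound.trans (lintegral_mono_set (Set.Ioc_subset_Ioc_left hx.1.le))
  rw [ENNReal.ofReal_le_iff_le_toReal hfin] at this
  linarith
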